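/- Let q be an even integer with 0 < q < m. Then for every t ∈ V_m, ξ⁻_q(t)·(ξ⁻_1(t) − ξ⁻_1(−q)) = q·ξ⁺_{q+1}(t) + ξ⁻_{q+1}(t) in R, where ξ⁻_1(−q) ∈ R is the value of ξ⁻_1 at the vertex −q. -/

import Mathlib

noncomputable section

open Finset MvPolynomial

/-- The coefficient ring `R = ℚ[α,δ]`, realized as polynomials in two variables. -/
abbrev Rpoly : Type := MvPolynomial (Fin 2) ℚ

/-- The variable `α`. -/
def va : Rpoly := X 0

/-- The variable `δ`. -/
def vd : Rpoly := X 1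

/-- `P⁻(a,b) = ∏_{k=a}^{b} (−α + k·δ)`. -/
def Pneg (a b : ℤ) : Rpoly :=
  ∏ k ∈ Finset.Icc a b, (-va + MvPolynomial.C (k : ℚ) * vd)

/-- `P⁺(a,b) = ∏_{k=a}^{b} (α + k·δ)`. -/
def Ppos (a b : ℤ) : Rpoly :=
  ∏ k ∈ Finset.Icc a b, (va + MvPolynomial.C (k : ℚ) * vd)

/-- Binomial coefficient `C(n,q)` (all uses have `n ≥ 0`). -/
def B (n : ℤ) (q : ℕ) : ℚ := (n.toNat).choose q

/-- The Knutson–Tao class `ξ⁺_q = ξ(m+q, m−q)`, as a function on vertices `t`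
(the vertex `t` encodes the pair `(m+t, m−t)`). -/
def xiP (m : ℤ) (q : ℕ) (t : ℤ) : Rpoly :=
  if (q : ℤ) ≤ t ∧ t ≤ m then
    MvPolynomial.C (B (⌈((t : ℚ) - (q : ℚ) + 1) / 2⌉ + q - 1) q) *
      Pneg (⌈((t : ℚ) - (q : ℚ) + 1) / 2⌉ - 1) (⌈((t : ℚ) - (q : ℚ) + 1) / 2⌉ + q - 2)
  else if -m ≤ t ∧ t ≤ -((q : ℤ) + 1) then
    MvPolynomial.C (B (⌈(-(t : ℚ) - (q : ℚ)) / 2⌉ + q - 1) q) *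
      Ppos (⌈(-(t : ℚ) - (q : ℚ)) / 2⌉ + 1) (⌈(-(t : ℚ) - (q : ℚ)) / 2⌉ + q)
  else 0

/-- The Knutson–Tao class `ξ⁻_q = ξ(m−q, m+q)`. -/
def xiM (m : ℤ) (q : ℕ) (t : ℤ) : Rpoly :=
  if (q : ℤ) + 1 ≤ t ∧ t ≤ m then
    MvPolynomial.C (B (⌈((t : ℚ) - (q : ℚ)) / 2⌉ + q - 1) q) *
      Pneg (⌈((t : ℚ) - (q : ℚ)) / 2⌉) (⌈((t : ℚ) - (q : ℚ)) / 2⌉ + q - 1)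
  else if -m ≤ t ∧ t ≤ -(q : ℤ) then
    MvPolynomial.C (B (⌈(-(t : ℚ) - (q : ℚ) + 1) / 2⌉ + q - 1) q) *
      Ppos (⌈(-(t : ℚ) - (q : ℚ) + 1) / 2⌉) (⌈(-(t : ℚ) - (q : ℚ) + 1) / 2⌉ + q - 1)
  else 0

/-- The weight of the vertex `t`: `w(t) = ((1−2t)/2)·α + (t(t−1)/2)·δ`. -/
def w (t : ℤ) : Rpoly :=
  MvPolynomial.C ((1 - 2 * (t : ℚ)) / 2) * va +
    MvPolynomial.C (((t : ℚ) * ((t : ℚ) - 1)) / 2) * vd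

lemma ceil_half_eq {a b : ℤ} (h1 : 2*b - 1 ≤ a) (h2 : a ≤ 2*b) : ⌈(a:ℚ)/2⌉ = b := by
  have ha1 : (2*(b:ℚ) - 1) ≤ a := by exact_mod_cast h1
  have ha2 : (a:ℚ) ≤ 2*b := by exact_mod_cast h2
  rw [Int.ceil_eq_iff]
  constructor <;> linarith

lemma B_eq {a : ℤ} {n : ℕ} (q : ℕ) (h : a = (n:ℤ)) : B a q = (n.choose q : ℚ) := by
  subst h; simp [B]

lemma xiM_pos' (m : ℤ) (q : ℕ) (t c : ℤ) (hc1 : 1 ≤ c) (h2 : t ≤ m)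
    (hb1 : 2*c - 1 ≤ t - q) (hb2 : t - q ≤ 2*c) :
    xiM m q t = C (B (c + q - 1) q) * Pneg c (c + q - 1) := by
  have hceil : ⌈((t:ℚ) - (q:ℚ))/2⌉ = c := by
    rw [show ((t:ℚ) - (q:ℚ))/2 = (((t - q : ℤ)):ℚ)/2 by push_cast; ring]
    exact ceil_half_eq hb1 hb2
  simp only [xiM]
  rw [if_pos ⟨by omega, h2⟩, hceil]

lemma xiM_neg' (m : ℤ) (q : ℕ) (t c : ℤ) (hc1 : 1 ≤ c) (h1 : -m ≤ t)
    (hb1 : 2*c - 1 ≤ -t - q + 1) (hb2 : -t - q + 1 ≤ 2*c) :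
    xiM m q t = C (B (c + q - 1) q) * Ppos c (c + q - 1) := by
  have hceil : ⌈(-(t:ℚ) - (q:ℚ) + 1)/2⌉ = c := by
    rw [show (-(t:ℚ) - (q:ℚ) + 1)/2 = (((-t - q + 1 : ℤ)):ℚ)/2 by push_cast; ring]
    exact ceil_half_eq hb1 hb2
  simp only [xiM]
  rw [if_neg (by omega), if_pos ⟨h1, by omega⟩, hceil]

lemma xiP_pos' (m : ℤ) (q : ℕ) (t c : ℤ) (hc1 : 1 ≤ c) (h2 : t ≤ m)
    (hb1 : 2*c - 1 ≤ t - q + 1) (hb2 : t - q + 1 ≤ 2*c) :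
    xiP m q t = C (B (c + q - 1) q) * Pneg (c - 1) (c + q - 2) := by
  have hceil : ⌈((t:ℚ) - (q:ℚ) + 1)/2⌉ = c := by
    rw [show ((t:ℚ) - (q:ℚ) + 1)/2 = (((t - q + 1 : ℤ)):ℚ)/2 by push_cast; ring]
    exact ceil_half_eq hb1 hb2
  simp only [xiP]
  rw [if_pos ⟨by omega, h2⟩, hceil]

lemma xiP_neg' (m : ℤ) (q : ℕ) (t c : ℤ) (hc1 : 1 ≤ c) (h1 : -m ≤ t)
    (hb1 : 2*c - 1 ≤ -t - q) (hb2 : -t - q ≤ 2*c) :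
    xiP m q t = C (B (c + q - 1) q) * Ppos (c + 1) (c + q) := by
  have hceil : ⌈(-(t:ℚ) - (q:ℚ))/2⌉ = c := by
    rw [show (-(t:ℚ) - (q:ℚ))/2 = (((-t - q : ℤ)):ℚ)/2 by push_cast; ring]
    exact ceil_half_eq hb1 hb2
  simp only [xiP]
  rw [if_neg (by omega), if_pos ⟨h1, by omega⟩, hceil]

lemma xiM_zero (m : ℤ) (q : ℕ) (t : ℤ) (h1 : ¬((q:ℤ) + 1 ≤ t ∧ t ≤ m))
    (h2 : ¬(-m ≤ t ∧ t ≤ -(q:ℤ))) : xiM m q t = 0 := by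
  simp only [xiM]; rw [if_neg h1, if_neg h2]

lemma xiP_zero (m : ℤ) (q : ℕ) (t : ℤ) (h1 : ¬((q:ℤ) ≤ t ∧ t ≤ m))
    (h2 : ¬(-m ≤ t ∧ t ≤ -((q:ℤ) + 1))) : xiP m q t = 0 := by
  simp only [xiP]; rw [if_neg h1, if_neg h2]

lemma Pneg_single (a : ℤ) : Pneg a a = -va + (a : Rpoly) * vd := by
  rw [Pneg, Finset.Icc_self, Finset.prod_singleton, map_intCast]

lemma Ppos_single (a : ℤ) : Ppos a a = va + (a : Rpoly) * vd := by
  rw [Ppos, Finset.Icc_self, Finset.prod_singleton, map_intCast]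

lemma Pneg_bot {a b : ℤ} (h : a ≤ b) :
    Pneg a b = (-va + (a : Rpoly) * vd) * Pneg (a+1) b := by
  rw [Pneg, Pneg, show Finset.Icc a b = insert a (Finset.Icc (a+1) b) by
    ext x; simp only [Finset.mem_Icc, Finset.mem_insert]; omega,
    Finset.prod_insert (by simp only [Finset.mem_Icc]; omega), map_intCast]

lemma Pneg_top {a b : ℤ} (h : a ≤ b) :
    Pneg a b = Pneg a (b-1) * (-va + (b : Rpoly) * vd) := by
  rw [Pneg, Pneg, show Finset.Icc a b = insert b (Finset.Icc a (b-1)) by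
    ext x; simp only [Finset.mem_Icc, Finset.mem_insert]; omega,
    Finset.prod_insert (by simp only [Finset.mem_Icc]; omega), map_intCast, mul_comm]

lemma Ppos_bot {a b : ℤ} (h : a ≤ b) :
    Ppos a b = (va + (a : Rpoly) * vd) * Ppos (a+1) b := by
  rw [Ppos, Ppos, show Finset.Icc a b = insert a (Finset.Icc (a+1) b) by
    ext x; simp only [Finset.mem_Icc, Finset.mem_insert]; omega,
    Finset.prod_insert (by simp only [Finset.mem_Icc]; omega), map_intCast]

lemma Ppos_top {a b : ℤ} (h : a ≤ b) :
    Ppos a b = Ppos a (b-1) * (va + (b : Rpoly) * vd) := by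
  rw [Ppos, Ppos, show Finset.Icc a b = insert b (Finset.Icc a (b-1)) by
    ext x; simp only [Finset.mem_Icc, Finset.mem_insert]; omega,
    Finset.prod_insert (by simp only [Finset.mem_Icc]; omega), map_intCast, mul_comm]
lemma coefA (e q : ℕ) : (e+q).choose q * (e+q+1) = (e+q+1).choose (q+1) * (q+1) := by
  have h := Nat.add_one_mul_choose_eq (e+q) q
  rw [mul_comm]
  simpa [Nat.succ_eq_add_one] using h

lemma coefB (e q : ℕ) : (e+q) * ((e+q).choose q) = q * ((e+q+1).choose (q+1)) + (e+q).choose (q+1) := by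
  have h1 : (e+q+1).choose (q+1) = (e+q).choose q + (e+q).choose (q+1) := Nat.choose_succ_succ (e+q) q
  have h2 : (e+q).choose (q+1) * (q+1) = (e+q).choose q * e := by
    have := Nat.choose_succ_right_eq (e+q) q
    simpa using this
  have h3 : q * ((e+q).choose q + (e+q).choose (q+1)) + (e+q).choose (q+1)
      = q * (e+q).choose q + ((e+q).choose (q+1) * (q+1)) := by ring
  rw [h1, h3, h2]; ring

lemma coefC (e q : ℕ) : (e+1) * ((e+q+1).choose q) = (e+q+1).choose (q+1) * (q+1) := by
  have h := Nat.choose_succ_right_eq (e+q+1) q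
  rw [show e+q+1-q = e+1 from by omega] at h
  rw [h]; ring

lemma coefD (e q : ℕ) : (e+1) * ((e+q).choose q) = q * ((e+q).choose (q+1)) + (e+q+1).choose (q+1) := by
  have h1 : (e+q+1).choose (q+1) = (e+q).choose q + (e+q).choose (q+1) := Nat.choose_succ_succ (e+q) q
  have h2 : (e+q).choose (q+1) * (q+1) = (e+q).choose q * e := by
    have := Nat.choose_succ_right_eq (e+q) q
    simpa using this
  have h3 : q * ((e+q).choose (q+1)) + ((e+q).choose q + (e+q).choose (q+1))
      = (e+q).choose q + ((e+q).choose (q+1) * (q+1)) := by ring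
  rw [h1, h3, h2]; ring


/-- for even `0 < q < m`,
`ξ⁻_q · (ξ⁻_1 − ξ⁻_1(−q)) = q·ξ⁺_{q+1} + ξ⁻_{q+1}` pointwise on `V_m`. -/
theorem statement9 (m : ℕ) (hm : 1 ≤ m) (q : ℕ) (heven : Even q)
    (hq0 : 0 < q) (hqm : q < m)
    (t : ℤ) (ht1 : -(m : ℤ) ≤ t) (ht2 : t ≤ (m : ℤ)) :
    xiM m q t * (xiM m 1 t - xiM m 1 (-(q : ℤ))) =
      (q : Rpoly) * xiP m (q + 1) t + xiM m (q + 1) t := by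
  obtain ⟨s, rfl⟩ := heven
  have hs1 : 1 ≤ s := by omega
  rcases lt_trichotomy t (-((s+s : ℕ) : ℤ)) with hlt | heq | hgt
  · rcases Int.even_or_odd (-t - (s+s)) with ⟨k, hk⟩ | ⟨k, hk⟩
    · -- Case D : t = -(q + 2e + 2)
      obtain ⟨e, rfl⟩ : ∃ e : ℕ, t = -(((s+s:ℕ):ℤ) + 2*(e:ℤ) + 2) := ⟨(k-1).toNat, by omega⟩
      rw [xiM_neg' (↑m) (s+s) (-(((s+s:ℕ):ℤ) + 2*(e:ℤ) + 2)) ((e:ℤ)+2)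
            (by omega) (by omega) (by omega) (by omega),
          xiM_neg' (↑m) 1 (-(((s+s:ℕ):ℤ) + 2*(e:ℤ) + 2)) ((s:ℤ)+(e:ℤ)+1)
            (by omega) (by omega) (by omega) (by omega),
          xiM_neg' (↑m) 1 (-((s+s:ℕ):ℤ)) ((s:ℤ))
            (by omega) (by omega) (by omega) (by omega),
          xiP_neg' (↑m) (s+s+1) (-(((s+s:ℕ):ℤ) + 2*(e:ℤ) + 2)) ((e:ℤ)+1)
            (by omega) (by omega) (by omega) (by omega),
          xiM_neg' (↑m) (s+s+1) (-(((s+s:ℕ):ℤ) + 2*(e:ℤ) + 2)) ((e:ℤ)+1)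
            (by omega) (by omega) (by omega) (by omega)]
      rw [show (e:ℤ)+2+((s+s:ℕ):ℤ)-1 = (e:ℤ)+(s:ℤ)+(s:ℤ)+1 from by push_cast; ring,
          show (s:ℤ)+(e:ℤ)+1+((1:ℕ):ℤ)-1 = (s:ℤ)+(e:ℤ)+1 from by push_cast; ring,
          show (s:ℤ)+((1:ℕ):ℤ)-1 = (s:ℤ) from by push_cast; ring,
          show (e:ℤ)+1+((s+s+1:ℕ):ℤ)-1 = (e:ℤ)+(s:ℤ)+(s:ℤ)+1 from by push_cast; ring,
          show (e:ℤ)+1+1 = (e:ℤ)+2 from by ring,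
          show (e:ℤ)+1+((s+s+1:ℕ):ℤ) = (e:ℤ)+(s:ℤ)+(s:ℤ)+2 from by push_cast; ring,
          B_eq (s+s) (show (e:ℤ)+(s:ℤ)+(s:ℤ)+1 = ((e+s+s+1:ℕ):ℤ) from by push_cast; ring),
          B_eq 1 (show (s:ℤ)+(e:ℤ)+1 = ((s+e+1:ℕ):ℤ) from by push_cast; ring),
          B_eq 1 (show (s:ℤ) = ((s:ℕ):ℤ) from rfl),
          B_eq (s+s+1) (show (e:ℤ)+(s:ℤ)+(s:ℤ)+1 = ((e+s+s+1:ℕ):ℤ) from by push_cast; ring)]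
      simp only [Nat.choose_one_right, map_natCast]
      rw [Ppos_single ((s:ℤ)+(e:ℤ)+1), Ppos_single ((s:ℤ)),
          Ppos_top (show (e:ℤ)+2 ≤ (e:ℤ)+(s:ℤ)+(s:ℤ)+2 from by omega),
          show (e:ℤ)+(s:ℤ)+(s:ℤ)+2-1 = (e:ℤ)+(s:ℤ)+(s:ℤ)+1 from by ring,
          Ppos_bot (show (e:ℤ)+1 ≤ (e:ℤ)+(s:ℤ)+(s:ℤ)+1 from by omega),
          show (e:ℤ)+1+1 = (e:ℤ)+2 from by ring]
      have hN := congrArg (Nat.cast : ℕ → Rpoly) (coefC e (s+s))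
      rw [show e+(s+s)+1 = e+s+s+1 from by omega] at hN
      push_cast at hN ⊢
      linear_combination ((va + ((s:Rpoly)+(s:Rpoly)+(e:Rpoly)+1)*vd) *
        Ppos ((e:ℤ)+2) ((e:ℤ)+(s:ℤ)+(s:ℤ)+1)) * hN
    · -- Case E : t = -(q + 2e + 1)
      obtain ⟨e, rfl⟩ : ∃ e : ℕ, t = -(((s+s:ℕ):ℤ) + 2*(e:ℤ) + 1) := ⟨k.toNat, by omega⟩
      have hP : xiP (↑m) (s+s+1) (-(((s+s:ℕ):ℤ) + 2*(e:ℤ) + 1)) =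
          (((e+s+s).choose (s+s+1) : ℕ) : Rpoly) * Ppos ((e:ℤ)+1) ((e:ℤ)+(s:ℤ)+(s:ℤ)+1) := by
        rcases Nat.eq_zero_or_pos e with rfl | he
        · rw [xiP_zero _ _ _ (by omega) (by omega),
             Nat.choose_eq_zero_of_lt (show 0+s+s < s+s+1 from by omega)]
          simp
        · rw [xiP_neg' (↑m) (s+s+1) (-(((s+s:ℕ):ℤ) + 2*(e:ℤ) + 1)) ((e:ℤ))
                (by omega) (by omega) (by omega) (by omega),
             show (e:ℤ)+((s+s+1:ℕ):ℤ)-1 = (e:ℤ)+(s:ℤ)+(s:ℤ) from by push_cast; ring,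
             show (e:ℤ)+((s+s+1:ℕ):ℤ) = (e:ℤ)+(s:ℤ)+(s:ℤ)+1 from by push_cast; ring,
             B_eq (s+s+1) (show (e:ℤ)+(s:ℤ)+(s:ℤ) = ((e+s+s:ℕ):ℤ) from by push_cast; ring),
             map_natCast]
      rw [hP,
          xiM_neg' (↑m) (s+s) (-(((s+s:ℕ):ℤ) + 2*(e:ℤ) + 1)) ((e:ℤ)+1)
            (by omega) (by omega) (by omega) (by omega),
          xiM_neg' (↑m) 1 (-(((s+s:ℕ):ℤ) + 2*(e:ℤ) + 1)) ((s:ℤ)+(e:ℤ)+1)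
            (by omega) (by omega) (by omega) (by omega),
          xiM_neg' (↑m) 1 (-((s+s:ℕ):ℤ)) ((s:ℤ))
            (by omega) (by omega) (by omega) (by omega),
          xiM_neg' (↑m) (s+s+1) (-(((s+s:ℕ):ℤ) + 2*(e:ℤ) + 1)) ((e:ℤ)+1)
            (by omega) (by omega) (by omega) (by omega)]
      rw [show (e:ℤ)+1+((s+s:ℕ):ℤ)-1 = (e:ℤ)+(s:ℤ)+(s:ℤ) from by push_cast; ring,
          show (s:ℤ)+(e:ℤ)+1+((1:ℕ):ℤ)-1 = (s:ℤ)+(e:ℤ)+1 from by push_cast; ring,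
          show (s:ℤ)+((1:ℕ):ℤ)-1 = (s:ℤ) from by push_cast; ring,
          show (e:ℤ)+1+((s+s+1:ℕ):ℤ)-1 = (e:ℤ)+(s:ℤ)+(s:ℤ)+1 from by push_cast; ring,
          B_eq (s+s) (show (e:ℤ)+(s:ℤ)+(s:ℤ) = ((e+s+s:ℕ):ℤ) from by push_cast; ring),
          B_eq 1 (show (s:ℤ)+(e:ℤ)+1 = ((s+e+1:ℕ):ℤ) from by push_cast; ring),
          B_eq 1 (show (s:ℤ) = ((s:ℕ):ℤ) from rfl),
          B_eq (s+s+1) (show (e:ℤ)+(s:ℤ)+(s:ℤ)+1 = ((e+s+s+1:ℕ):ℤ) from by push_cast; ring)]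
      simp only [Nat.choose_one_right, map_natCast]
      rw [Ppos_single ((s:ℤ)+(e:ℤ)+1), Ppos_single ((s:ℤ)),
          Ppos_top (show (e:ℤ)+1 ≤ (e:ℤ)+(s:ℤ)+(s:ℤ)+1 from by omega),
          show (e:ℤ)+(s:ℤ)+(s:ℤ)+1-1 = (e:ℤ)+(s:ℤ)+(s:ℤ) from by ring]
      have hN := congrArg (Nat.cast : ℕ → Rpoly) (coefD e (s+s))
      rw [show e+(s+s) = e+s+s from by omega] at hN
      push_cast at hN ⊢
      linear_combination ((va + ((s:Rpoly)+(s:Rpoly)+(e:Rpoly)+1)*vd) *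
        Ppos ((e:ℤ)+1) ((e:ℤ)+(s:ℤ)+(s:ℤ))) * hN
  · -- t = -q
    subst heq
    rw [xiP_zero _ _ _ (by omega) (by omega), xiM_zero (↑m) (s+s+1) _ (by omega) (by omega),
        sub_self]
    ring
  · rcases le_or_gt t ((s+s : ℕ) : ℤ) with hmid | hpos
    · -- middle: everything vanishes
      rw [xiM_zero (↑m) (s+s) t (by omega) (by omega),
          xiP_zero _ _ _ (by omega) (by omega),
          xiM_zero (↑m) (s+s+1) t (by omega) (by omega)]
      ring
    · rcases Int.even_or_odd (t - (s+s)) with ⟨k, hk⟩ | ⟨k, hk⟩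
      · -- Case A : t = q + 2e + 2
        obtain ⟨e, rfl⟩ : ∃ e : ℕ, t = ((s+s:ℕ):ℤ) + 2*(e:ℤ) + 2 := ⟨(k-1).toNat, by omega⟩
        rw [xiM_pos' (↑m) (s+s) (((s+s:ℕ):ℤ) + 2*(e:ℤ) + 2) ((e:ℤ)+1)
              (by omega) (by omega) (by omega) (by omega),
            xiM_pos' (↑m) 1 (((s+s:ℕ):ℤ) + 2*(e:ℤ) + 2) ((s:ℤ)+(e:ℤ)+1)
              (by omega) (by omega) (by omega) (by omega),
            xiM_neg' (↑m) 1 (-((s+s:ℕ):ℤ)) ((s:ℤ))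
              (by omega) (by omega) (by omega) (by omega),
            xiP_pos' (↑m) (s+s+1) (((s+s:ℕ):ℤ) + 2*(e:ℤ) + 2) ((e:ℤ)+1)
              (by omega) (by omega) (by omega) (by omega),
            xiM_pos' (↑m) (s+s+1) (((s+s:ℕ):ℤ) + 2*(e:ℤ) + 2) ((e:ℤ)+1)
              (by omega) (by omega) (by omega) (by omega)]
        rw [show (e:ℤ)+1+((s+s:ℕ):ℤ)-1 = (e:ℤ)+(s:ℤ)+(s:ℤ) from by push_cast; ring,
            show (s:ℤ)+(e:ℤ)+1+((1:ℕ):ℤ)-1 = (s:ℤ)+(e:ℤ)+1 from by push_cast; ring,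
            show (s:ℤ)+((1:ℕ):ℤ)-1 = (s:ℤ) from by push_cast; ring,
            show (e:ℤ)+1+((s+s+1:ℕ):ℤ)-1 = (e:ℤ)+(s:ℤ)+(s:ℤ)+1 from by push_cast; ring,
            show (e:ℤ)+1-1 = (e:ℤ) from by ring,
            show (e:ℤ)+1+((s+s+1:ℕ):ℤ)-2 = (e:ℤ)+(s:ℤ)+(s:ℤ) from by push_cast; ring,
            B_eq (s+s) (show (e:ℤ)+(s:ℤ)+(s:ℤ) = ((e+s+s:ℕ):ℤ) from by push_cast; ring),
            B_eq 1 (show (s:ℤ)+(e:ℤ)+1 = ((s+e+1:ℕ):ℤ) from by push_cast; ring),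
            B_eq 1 (show (s:ℤ) = ((s:ℕ):ℤ) from rfl),
            B_eq (s+s+1) (show (e:ℤ)+(s:ℤ)+(s:ℤ)+1 = ((e+s+s+1:ℕ):ℤ) from by push_cast; ring)]
        simp only [Nat.choose_one_right, map_natCast]
        rw [Pneg_single ((s:ℤ)+(e:ℤ)+1), Ppos_single ((s:ℤ)),
            Pneg_bot (show (e:ℤ) ≤ (e:ℤ)+(s:ℤ)+(s:ℤ) from by omega),
            Pneg_top (show (e:ℤ)+1 ≤ (e:ℤ)+(s:ℤ)+(s:ℤ)+1 from by omega),
            show (e:ℤ)+(s:ℤ)+(s:ℤ)+1-1 = (e:ℤ)+(s:ℤ)+(s:ℤ) from by ring]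
        have hN := congrArg (Nat.cast : ℕ → Rpoly) (coefA e (s+s))
        rw [show e+(s+s) = e+s+s from by omega] at hN
        push_cast at hN ⊢
        linear_combination ((-va + ((e:Rpoly)+1)*vd) *
          Pneg ((e:ℤ)+1) ((e:ℤ)+(s:ℤ)+(s:ℤ))) * hN
      · -- Case B : t = q + 2e + 1
        obtain ⟨e, rfl⟩ : ∃ e : ℕ, t = ((s+s:ℕ):ℤ) + 2*(e:ℤ) + 1 := ⟨k.toNat, by omega⟩
        have hM' : xiM (↑m) (s+s+1) (((s+s:ℕ):ℤ) + 2*(e:ℤ) + 1) =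
            (((e+s+s).choose (s+s+1) : ℕ) : Rpoly) * Pneg ((e:ℤ)) ((e:ℤ)+(s:ℤ)+(s:ℤ)) := by
          rcases Nat.eq_zero_or_pos e with rfl | he
          · rw [xiM_zero _ _ _ (by omega) (by omega),
               Nat.choose_eq_zero_of_lt (show 0+s+s < s+s+1 from by omega)]
            simp
          · rw [xiM_pos' (↑m) (s+s+1) (((s+s:ℕ):ℤ) + 2*(e:ℤ) + 1) ((e:ℤ))
                  (by omega) (by omega) (by omega) (by omega),
               show (e:ℤ)+((s+s+1:ℕ):ℤ)-1 = (e:ℤ)+(s:ℤ)+(s:ℤ) from by push_cast; ring,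
               B_eq (s+s+1) (show (e:ℤ)+(s:ℤ)+(s:ℤ) = ((e+s+s:ℕ):ℤ) from by push_cast; ring),
               map_natCast]
        rw [hM',
            xiM_pos' (↑m) (s+s) (((s+s:ℕ):ℤ) + 2*(e:ℤ) + 1) ((e:ℤ)+1)
              (by omega) (by omega) (by omega) (by omega),
            xiM_pos' (↑m) 1 (((s+s:ℕ):ℤ) + 2*(e:ℤ) + 1) ((s:ℤ)+(e:ℤ))
              (by omega) (by omega) (by omega) (by omega),
            xiM_neg' (↑m) 1 (-((s+s:ℕ):ℤ)) ((s:ℤ))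
              (by omega) (by omega) (by omega) (by omega),
            xiP_pos' (↑m) (s+s+1) (((s+s:ℕ):ℤ) + 2*(e:ℤ) + 1) ((e:ℤ)+1)
              (by omega) (by omega) (by omega) (by omega)]
        rw [show (e:ℤ)+1+((s+s:ℕ):ℤ)-1 = (e:ℤ)+(s:ℤ)+(s:ℤ) from by push_cast; ring,
            show (s:ℤ)+(e:ℤ)+((1:ℕ):ℤ)-1 = (s:ℤ)+(e:ℤ) from by push_cast; ring,
            show (s:ℤ)+((1:ℕ):ℤ)-1 = (s:ℤ) from by push_cast; ring,
            show (e:ℤ)+1+((s+s+1:ℕ):ℤ)-1 = (e:ℤ)+(s:ℤ)+(s:ℤ)+1 from by push_cast; ring,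
            show (e:ℤ)+1-1 = (e:ℤ) from by ring,
            show (e:ℤ)+1+((s+s+1:ℕ):ℤ)-2 = (e:ℤ)+(s:ℤ)+(s:ℤ) from by push_cast; ring,
            B_eq (s+s) (show (e:ℤ)+(s:ℤ)+(s:ℤ) = ((e+s+s:ℕ):ℤ) from by push_cast; ring),
            B_eq 1 (show (s:ℤ)+(e:ℤ) = ((s+e:ℕ):ℤ) from by push_cast; ring),
            B_eq 1 (show (s:ℤ) = ((s:ℕ):ℤ) from rfl),
            B_eq (s+s+1) (show (e:ℤ)+(s:ℤ)+(s:ℤ)+1 = ((e+s+s+1:ℕ):ℤ) from by push_cast; ring)]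
        simp only [Nat.choose_one_right, map_natCast]
        rw [Pneg_single ((s:ℤ)+(e:ℤ)), Ppos_single ((s:ℤ)),
            Pneg_bot (show (e:ℤ) ≤ (e:ℤ)+(s:ℤ)+(s:ℤ) from by omega)]
        have hN := congrArg (Nat.cast : ℕ → Rpoly) (coefB e (s+s))
        rw [show e+(s+s) = e+s+s from by omega] at hN
        push_cast at hN ⊢
        linear_combination ((-va + (e:Rpoly)*vd) *
          Pneg ((e:ℤ)+1) ((e:ℤ)+(s:ℤ)+(s:ℤ))) * hN
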